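/- A graph G is separated for the double negation topology on the topos of graphs if and only if G has no parallel arcs, i.e., for any two arcs a, b with src(a) = src(b) and tgt(a) = tgt(b) we have a = b. -/

import Mathlib

/-- A directed graph: nodes, arcs, source and target maps. -/
structure DGraph where
  N : Type
  A : Type
  src : A → N
  tgt : A → N

/-- A graph morphism. -/
@[ext]
structure Hom (G H : DGraph) where
  fN : G.N → H.N
  fA : G.A → H.A
  hsrc : ∀ a, H.src (fA a) = fN (G.src a)
  htgt : ∀ a, H.tgt (fA a) = fN (G.tgt a)

/-- Composition of graph morphisms. -/
def Hom.comp {G H K : DGraph} (g : Hom H K) (f : Hom G H) : Hom G K where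
  fN := g.fN ∘ f.fN
  fA := g.fA ∘ f.fA
  hsrc a := by simp [g.hsrc, f.hsrc]
  htgt a := by simp [g.htgt, f.htgt]

/-- A subgraph of `G`, given by a set of nodes and a set of arcs whose
endpoints belong to the node set. -/
def IsSubgraph (G : DGraph) (SN : Set G.N) (SA : Set G.A) : Prop :=
  ∀ a ∈ SA, G.src a ∈ SN ∧ G.tgt a ∈ SN

/-- The subgraph of `Y` determined by node set `SN` and arc set `SA`. -/
def subG (Y : DGraph) (SN : Set Y.N) (SA : Set Y.A) (h : IsSubgraph Y SN SA) : DGraph where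
  N := SN
  A := SA
  src a := ⟨Y.src a.val, (h a.val a.prop).1⟩
  tgt a := ⟨Y.tgt a.val, (h a.val a.prop).2⟩

/-- The inclusion of a subgraph. -/
def incl (Y : DGraph) (SN : Set Y.N) (SA : Set Y.A) (h : IsSubgraph Y SN SA) :
    Hom (subG Y SN SA h) Y :=
  ⟨Subtype.val, Subtype.val, fun _ => rfl, fun _ => rfl⟩

/-- `G` is separated for the double negation topology: for every dense subgraph
(i.e. one containing all nodes) of any graph `Y`, two morphisms `Y → G` agreeing
on the subgraph are equal. -/
def SeparatedNN (G : DGraph) : Prop :=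
  ∀ (Y : DGraph) (SA : Set Y.A) (h : IsSubgraph Y Set.univ SA)
    (g₁ g₂ : Hom Y G),
      g₁.comp (incl Y Set.univ SA h) = g₂.comp (incl Y Set.univ SA h) → g₁ = g₂

/-- a graph is separated for the double negation topology iff it
has no parallel arcs. -/
theorem separated_iff_no_parallel (G : DGraph) :
    SeparatedNN G ↔
      ∀ a b : G.A, G.src a = G.src b → G.tgt a = G.tgt b → a = b := by
  constructor
  · intro hsep a b hs ht
    let Y : DGraph := ⟨G.N, Unit, fun _ => G.src a, fun _ => G.tgt a⟩
    have h : IsSubgraph Y Set.univ (∅ : Set Y.A) := fun x hx => hx.elim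
    have h1 : ∀ u : Y.A, G.src a = G.src b := fun _ => hs
    let g₁ : Hom Y G := ⟨id, fun _ => a, fun _ => rfl, fun _ => rfl⟩
    let g₂ : Hom Y G := ⟨id, fun _ => b, fun _ => hs.symm, fun _ => ht.symm⟩
    have := hsep Y ∅ h g₁ g₂ (by
      apply Hom.ext
      · rfl
      · funext x; exact x.prop.elim)
    have : g₁.fA () = g₂.fA () := by rw [this]
    exact this
  · intro hnp Y SA h g₁ g₂ heq
    have hN : g₁.fN = g₂.fN := by
      funext x
      have := congrArg Hom.fN heq
      exact congrFun this ⟨x, trivial⟩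
    apply Hom.ext hN
    funext x
    apply hnp
    · rw [g₁.hsrc, g₂.hsrc, hN]
    · rw [g₁.htgt, g₂.htgt, hN]
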